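/- arXiv:2202.06514 — 2 statements merged into one kernel-verified Lean document; each statement's English description precedes it below -/
import Mathlib

section
/- Let F be a field, α ∈ F^×, and x, y ∈ F not both zero with b := x² − α y² ≠ 0. Then the symbol {α, b} lies in 2·K₂F, i.e. {α, b} is divisible by 2 in the Milnor K-group K₂F. -/
open TensorProduct

/-- The Steinberg submodule of `Fˣ ⊗ Fˣ`: spanned by `a ⊗ (1 - a)` for `a ≠ 1`. -/
def steinberg (F : Type*) [Field F] :
    Submodule ℤ (Additive Fˣ ⊗[ℤ] Additive Fˣ) :=
  Submodule.span ℤ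
    { z | ∃ (a : Fˣ) (h : (a : F) ≠ 1),
        z = Additive.ofMul a ⊗ₜ[ℤ]
            Additive.ofMul (Units.mk0 (1 - (a : F)) (sub_ne_zero.mpr h.symm)) }

/-- The Milnor K-group `K₂ F`. -/
def K2 (F : Type*) [Field F] :=
  (Additive Fˣ ⊗[ℤ] Additive Fˣ) ⧸ steinberg F

noncomputable instance (F : Type*) [Field F] : AddCommGroup (K2 F) :=
  inferInstanceAs (AddCommGroup ((Additive Fˣ ⊗[ℤ] Additive Fˣ) ⧸ steinberg F))

/-- The symbol `{a, b}` in `K₂ F`. -/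
noncomputable def symbol {F : Type*} [Field F] (a b : Fˣ) : K2 F :=
  Submodule.Quotient.mk (Additive.ofMul a ⊗ₜ[ℤ] Additive.ofMul b)

section Aux
variable {F : Type*} [Field F]

lemma symbol_mul_left (a b c : Fˣ) : symbol (a * b) c = symbol a c + symbol b c := by
  unfold symbol
  show (Submodule.Quotient.mk _ : (Additive Fˣ ⊗[ℤ] Additive Fˣ) ⧸ steinberg F) = (Submodule.Quotient.mk _ : (Additive Fˣ ⊗[ℤ] Additive Fˣ) ⧸ steinberg F) + (Submodule.Quotient.mk _ : (Additive Fˣ ⊗[ℤ] Additive Fˣ) ⧸ steinberg F)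
  rw [← Submodule.Quotient.mk_add]
  congr 1
  show Additive.ofMul (a * b) ⊗ₜ[ℤ] _ = _
  rw [ofMul_mul, add_tmul]

lemma symbol_mul_right (a b c : Fˣ) : symbol a (b * c) = symbol a b + symbol a c := by
  unfold symbol
  show (Submodule.Quotient.mk _ : (Additive Fˣ ⊗[ℤ] Additive Fˣ) ⧸ steinberg F) = (Submodule.Quotient.mk _ : (Additive Fˣ ⊗[ℤ] Additive Fˣ) ⧸ steinberg F) + (Submodule.Quotient.mk _ : (Additive Fˣ ⊗[ℤ] Additive Fˣ) ⧸ steinberg F)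
  rw [← Submodule.Quotient.mk_add]
  congr 1
  show _ ⊗ₜ[ℤ] Additive.ofMul (b * c) = _
  rw [ofMul_mul, tmul_add]

lemma symbol_one_left (c : Fˣ) : symbol (1 : Fˣ) c = 0 := by
  unfold symbol
  rw [show Additive.ofMul (1 : Fˣ) = 0 from rfl, zero_tmul]
  exact Submodule.Quotient.mk_zero _

lemma symbol_one_right (a : Fˣ) : symbol a (1 : Fˣ) = 0 := by
  unfold symbol
  rw [show Additive.ofMul (1 : Fˣ) = 0 from rfl, tmul_zero]
  exact Submodule.Quotient.mk_zero _

lemma symbol_inv_left (a c : Fˣ) : symbol a⁻¹ c = - symbol a c := by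
  have h := symbol_mul_left a a⁻¹ c
  rw [mul_inv_cancel, symbol_one_left] at h
  rw [eq_neg_iff_add_eq_zero, add_comm]
  exact h.symm

lemma symbol_inv_right (a c : Fˣ) : symbol a c⁻¹ = - symbol a c := by
  have h := symbol_mul_right a c c⁻¹
  rw [mul_inv_cancel, symbol_one_right] at h
  rw [eq_neg_iff_add_eq_zero, add_comm]
  exact h.symm

lemma symbol_steinberg (a : Fˣ) (h : (a : F) ≠ 1) :
    symbol a (Units.mk0 (1 - (a : F)) (sub_ne_zero.mpr h.symm)) = 0 := by
  unfold symbol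
  show (Submodule.Quotient.mk _ : _ ⧸ steinberg F) = 0
  rw [Submodule.Quotient.mk_eq_zero]
  exact Submodule.subset_span ⟨a, h, rfl⟩

lemma symbol_neg_self (a : Fˣ) : symbol a (-a) = 0 := by
  by_cases h : (a : F) = 1
  · have : a = 1 := Units.ext h
    subst this
    exact symbol_one_left _
  · have hA : (a : F) ≠ 0 := a.ne_zero
    have ha' : ((a⁻¹ : Fˣ) : F) ≠ 1 := by
      rw [Units.val_inv_eq_inv_val]
      intro hinv
      apply h
      field_simp at hinv
      simp [hinv]
    have hne'' : (1 : F) - (a : F)⁻¹ ≠ 0 := by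
      rw [← Units.val_inv_eq_inv_val]
      exact sub_ne_zero.mpr (Ne.symm ha')
    have key : (-a : Fˣ) =
        Units.mk0 (1 - (a : F)) (sub_ne_zero.mpr (Ne.symm h)) *
        (Units.mk0 (1 - ((a⁻¹ : Fˣ) : F)) (sub_ne_zero.mpr (Ne.symm ha')))⁻¹ := by
      apply Units.ext
      simp only [Units.val_neg, Units.val_mul, Units.val_inv_eq_inv_val, Units.val_mk0]
      rw [eq_comm, ← div_eq_mul_inv, div_eq_iff hne'', mul_sub, neg_mul, neg_mul,
        mul_inv_cancel₀ hA]
      ring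
    have h5 : symbol a (Units.mk0 (1 - ((a⁻¹ : Fˣ) : F))
        (sub_ne_zero.mpr (Ne.symm ha'))) = 0 := by
      have h6 := symbol_steinberg a⁻¹ ha'
      rw [symbol_inv_left, neg_eq_zero] at h6
      exact h6
    rw [key, symbol_mul_right, symbol_steinberg a h, symbol_inv_right, h5,
      neg_zero, add_zero]

end Aux

/-- If `b = x² − α y² ≠ 0` with `x, y` not both zero, then `{α, b}` is divisible
by `2` in `K₂ F`. -/
theorem symbol_norm_two_divisible (F : Type*) [Field F] (α : Fˣ) (x y : F)
    (hxy : ¬ (x = 0 ∧ y = 0)) (hb : x ^ 2 - (α : F) * y ^ 2 ≠ 0) :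
    ∃ τ : K2 F, symbol α (Units.mk0 (x ^ 2 - (α : F) * y ^ 2) hb) = 2 • τ := by
  by_cases hy : y = 0
  · -- b = x², so {α, b} = 2{α, x}
    have hx : x ≠ 0 := fun hx => hxy ⟨hx, hy⟩
    have heq : Units.mk0 (x ^ 2 - (α : F) * y ^ 2) hb =
        Units.mk0 x hx * Units.mk0 x hx := by
      apply Units.ext
      simp only [Units.val_mk0, Units.val_mul, hy]
      ring
    refine ⟨symbol α (Units.mk0 x hx), ?_⟩
    rw [heq, symbol_mul_right, two_smul]
  · by_cases hx : x = 0
    · -- b = -α y², so {α, b} = {α, -α} + 2{α, y} = 2{α, y}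
      have heq : Units.mk0 (x ^ 2 - (α : F) * y ^ 2) hb =
          (-α) * (Units.mk0 y hy * Units.mk0 y hy) := by
        apply Units.ext
        simp only [Units.val_mk0, Units.val_mul, Units.val_neg, hx]
        ring
      refine ⟨symbol α (Units.mk0 y hy), ?_⟩
      rw [heq, symbol_mul_right, symbol_mul_right, symbol_neg_self, zero_add, two_smul]
    · -- general case: c = x/y, u = c² - α, b = y² u
      have hc : x / y ≠ 0 := div_ne_zero hx hy
      have hkey : x ^ 2 - (α : F) * y ^ 2 = y ^ 2 * ((x / y) ^ 2 - (α : F)) := by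
        field_simp
      have hu : (x / y) ^ 2 - (α : F) ≠ 0 := by
        intro h0
        exact hb (by rw [hkey, h0, mul_zero])
      set mc := Units.mk0 (x / y) hc with hmc
      set mu := Units.mk0 ((x / y) ^ 2 - (α : F)) hu with hmu
      set my := Units.mk0 y hy with hmy
      have heq : Units.mk0 (x ^ 2 - (α : F) * y ^ 2) hb = my * my * mu := by
        apply Units.ext
        simp only [hmc, hmu, hmy, Units.val_mk0, Units.val_mul]
        rw [hkey]
        ring
      -- Steinberg for a = α / c²
      have hane : ((α * (mc * mc)⁻¹ : Fˣ) : F) ≠ 1 := by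
        simp only [Units.val_mul, Units.val_inv_eq_inv_val, hmc, Units.val_mk0]
        intro h1
        apply hu
        have hcc : (x / y) * (x / y) ≠ 0 := mul_ne_zero hc hc
        field_simp at h1
        have h2 : (x / y) ^ 2 = (α : F) := by
          field_simp
          linear_combination -h1
        rw [h2, sub_self]
      have hs : Units.mk0 (1 - ((α * (mc * mc)⁻¹ : Fˣ) : F)) (sub_ne_zero.mpr hane.symm)
          = mu * (mc * mc)⁻¹ := by
        apply Units.ext
        simp only [Units.val_mul, Units.val_inv_eq_inv_val, Units.val_mk0, hmc, hmu]
        have hcc : (x / y) * (x / y) ≠ 0 := mul_ne_zero hc hc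
        field_simp
      have t1 : symbol (α * (mc * mc)⁻¹) (mu * (mc * mc)⁻¹) = 0 := by
        rw [← hs]
        exact symbol_steinberg _ hane
      have t2 : symbol (α * (mc * mc)⁻¹) (mu * (mc * mc)⁻¹) =
          symbol α mu - 2 • symbol α mc - 2 • symbol mc mu + 4 • symbol mc mc := by
        simp only [symbol_mul_left, symbol_mul_right, symbol_inv_left, symbol_inv_right]
        abel
      rw [t2] at t1
      have e2 : symbol α mu =
          2 • symbol α mc + 2 • symbol mc mu - 4 • symbol mc mc := by
        rw [← sub_eq_zero, ← t1]
        abel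
      refine ⟨symbol α my + symbol α mc + symbol mc mu - 2 • symbol mc mc, ?_⟩
      rw [heq, symbol_mul_right, symbol_mul_right, e2]
      abel
end

section
/- Let F be a field of characteristic ≠ 2 and let φ be an anisotropic quadratic form over F whose set of nonzero represented values D(φ) ⊆ F^× is closed under multiplication. If the form φ ⊥ aφ is isotropic for some a ∈ F^×, then −a ∈ D(φ). -/
/-- Let `φ` be an anisotropic quadratic form over a field `F` of characteristic `≠ 2`
whose set of nonzero represented values is closed under multiplication. If
`φ ⊥ aφ` is isotropic for some `a ∈ Fˣ`, then `−a` is represented by `φ`. -/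
theorem represents_neg_of_isotropic (F V : Type*) [Field F] (hF : ringChar F ≠ 2)
    [AddCommGroup V] [Module F V] (φ : QuadraticForm F V)
    (han : φ.Anisotropic)
    (hmul : ∀ x y : F, x ≠ 0 → y ≠ 0 → (∃ u : V, φ u = x) → (∃ v : V, φ v = y) →
      ∃ w : V, φ w = x * y)
    (a : F) (ha : a ≠ 0)
    (hiso : ∃ p : V × V, p ≠ 0 ∧ φ p.1 + a * φ p.2 = 0) :
    ∃ v : V, φ v = -a := by
  obtain ⟨⟨u, v⟩, hp, heq⟩ := hiso
  simp only at heq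
  by_cases hv : v = 0
  · subst hv
    rw [map_zero, mul_zero, add_zero] at heq
    exact absurd (by rw [han u heq]; rfl : (u, (0:V)) = 0) hp
  have hφv : φ v ≠ 0 := fun h => hv (han v h)
  have hu : u ≠ 0 := by
    rintro rfl
    rw [map_zero, zero_add] at heq
    exact hφv ((mul_eq_zero.mp heq).resolve_left ha)
  have hφu : φ u ≠ 0 := fun h => hu (han u h)
  obtain ⟨w, hw⟩ := hmul (φ u) (φ v) hφu hφv ⟨u, rfl⟩ ⟨v, rfl⟩
  refine ⟨(φ v)⁻¹ • w, ?_⟩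
  rw [QuadraticMap.map_smul, hw]
  have : φ u = -a * φ v := by linear_combination heq
  rw [this]
  field_simp
  rw [smul_eq_mul, one_div, mul_neg, ← mul_assoc, inv_mul_cancel₀ (pow_ne_zero 2 hφv), one_mul]
end
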